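/- Let B be an H×H real matrix, let n > 0, m_r > 0, m_s > 0 be reals, and let t₀ > 0. Define Π(t) = n·(m_r/m_s)·(exp(m_s·log(t/t₀)·B) − I) for t ≥ t₀. Then Π(t₀) = 0 and for every t > 0 the function Π has derivative Π′(t) = (n·m_r/t)·B + (m_s/t)·B·Π(t). Moreover, Π is the unique continuous matrix-valued function on [t₀, ∞) with Π(t₀) = 0 satisfying this differential equation at every t > t₀. -/

import Mathlib

open Matrix Filter

/-- `Π(t) = n·(m_r/m_s)·(exp(m_s·log(t/t₀)·B) − I)` vanishes at `t₀`, solves the mean-field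
ODE `Π′(t) = (n·m_r/t)·B + (m_s/t)·B·Π(t)` at every `t > 0`, and is the unique continuous
solution on `[t₀, ∞)` with `Π(t₀) = 0`. -/
theorem stmt4 (H : ℕ) (B : Matrix (Fin H) (Fin H) ℝ) (n mr ms t₀ : ℝ)
    (hn : 0 < n) (hmr : 0 < mr) (hms : 0 < ms) (ht₀ : 0 < t₀) :
    let Φ : ℝ → Matrix (Fin H) (Fin H) ℝ := fun t =>
      (n * (mr / ms)) • (NormedSpace.exp ((ms * Real.log (t / t₀)) • B) - 1)
    (Φ t₀ = 0) ∧
    (∀ t : ℝ, 0 < t → ∀ i j, HasDerivAt (fun s : ℝ => Φ s i j)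
        (((n * mr / t) • B + (ms / t) • (B * Φ t)) i j) t) ∧
    (∀ Ψ : ℝ → Matrix (Fin H) (Fin H) ℝ,
      (∀ i j, ContinuousOn (fun s : ℝ => Ψ s i j) (Set.Ici t₀)) →
      Ψ t₀ = 0 →
      (∀ t : ℝ, t₀ < t → ∀ i j, HasDerivAt (fun s : ℝ => Ψ s i j)
        (((n * mr / t) • B + (ms / t) • (B * Ψ t)) i j) t) →
      ∀ t ∈ Set.Ici t₀, Ψ t = Φ t) := by
  intro Φ
  letI : NormedRing (Matrix (Fin H) (Fin H) ℝ) := Matrix.linftyOpNormedRing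
  letI : NormedAlgebra ℝ (Matrix (Fin H) (Fin H) ℝ) := Matrix.linftyOpNormedAlgebra
  haveI : CompleteSpace (Matrix (Fin H) (Fin H) ℝ) := inferInstance
  set c : ℝ := n * (mr / ms) with hc
  set g : ℝ → ℝ := fun t => ms * Real.log (t / t₀) with hgdef
  have hΦdef : ∀ t, Φ t = c • (NormedSpace.exp (g t • B) - 1) := fun _ => rfl
  set E : ℝ → Matrix (Fin H) (Fin H) ℝ := fun s => NormedSpace.exp (g s • B) with hEdef
  set F : ℝ → Matrix (Fin H) (Fin H) ℝ := fun s => NormedSpace.exp (g s • (-B)) with hFdef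
  -- derivative of g
  have hg : ∀ t : ℝ, 0 < t → HasDerivAt g (ms / t) t := by
    intro t ht
    have h1 : HasDerivAt (fun s : ℝ => s / t₀) (1 / t₀) t := by
      simpa using (hasDerivAt_id t).div_const t₀
    have h2 : HasDerivAt (fun s : ℝ => Real.log (s / t₀)) ((t / t₀)⁻¹ * (1 / t₀)) t :=
      HasDerivAt.comp (h₂ := Real.log) t (Real.hasDerivAt_log (div_ne_zero ht.ne' ht₀.ne')) h1
    have h3 := h2.const_mul ms
    refine h3.congr_deriv ?_
    field_simp
  -- entry extraction
  have entry : ∀ (i j : Fin H) {f : ℝ → Matrix (Fin H) (Fin H) ℝ}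
      {f' : Matrix (Fin H) (Fin H) ℝ} {t : ℝ},
      HasDerivAt f f' t → HasDerivAt (fun s => f s i j) (f' i j) t := by
    intro i j f f' t hf
    let L : Matrix (Fin H) (Fin H) ℝ →ₗ[ℝ] ℝ :=
      { toFun := fun M => M i j, map_add' := fun _ _ => rfl, map_smul' := fun _ _ => rfl }
    have := (L.toContinuousLinearMap.hasFDerivAt.comp t hf.hasFDerivAt).hasDerivAt
    convert this using 1
    · rfl
    · rfl
    · rfl
    · show f' i j = ((1 : ℝ) • f') i j
      rw [one_smul]
  have hE : ∀ t : ℝ, 0 < t → HasDerivAt E ((ms / t) • (B * E t)) t := fun t ht =>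
    (hasDerivAt_exp_smul_const' B (g t)).scomp t (hg t ht)
  have hF : ∀ t : ℝ, 0 < t → HasDerivAt F ((ms / t) • ((-B) * F t)) t := fun t ht =>
    (hasDerivAt_exp_smul_const' (-B) (g t)).scomp t (hg t ht)
  have hgt₀ : g t₀ = 0 := by simp [hgdef, div_self ht₀.ne']
  have hΦt₀ : Φ t₀ = 0 := by
    rw [hΦdef, hgt₀]
    simp [NormedSpace.exp_zero]
  refine ⟨hΦt₀, ?_, ?_⟩
  · -- the ODE
    intro t ht i j
    have hscal : ms / t * c = n * mr / t := by rw [hc]; field_simp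
    have hscal2 : c * (ms / t) = n * mr / t := by rw [← hscal]; ring
    have key : c • ((ms / t) • (B * E t)) = (n * mr / t) • B + (ms / t) • (B * Φ t) := by
      rw [hΦdef t, mul_smul_comm, Matrix.mul_sub, Matrix.mul_one, smul_smul, hscal2]
      simp only [hEdef, smul_sub, smul_smul, hscal]
      abel
    have h := ((entry i j (hE t ht)).sub_const ((1 : Matrix (Fin H) (Fin H) ℝ) i j)).const_mul c
    rw [← key]
    simpa [hΦdef, Matrix.smul_apply, Matrix.sub_apply, smul_eq_mul] using h
  · -- uniqueness
    intro Ψ hΨc hΨ0 hΨ'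
    set V : ℝ → Matrix (Fin H) (Fin H) ℝ := fun s => Ψ s + c • (1 : Matrix (Fin H) (Fin H) ℝ)
      with hVdef
    set W : ℝ → Matrix (Fin H) (Fin H) ℝ := fun s => F s * V s with hWdef
    have hFcont : ∀ i k, ContinuousOn (fun s => F s i k) (Set.Ici t₀) := fun i k s hs =>
      ((entry i k (hF s (lt_of_lt_of_le ht₀ hs))).continuousAt).continuousWithinAt
    have hWcont : ∀ i j, ContinuousOn (fun s => W s i j) (Set.Ici t₀) := by
      intro i j
      have : ∀ s : ℝ, W s i j = ∑ k, F s i k * (Ψ s k j + c * (1 : Matrix (Fin H) (Fin H) ℝ) k j) := by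
        intro s
        simp [hWdef, hVdef, Matrix.mul_apply, Matrix.add_apply, Matrix.smul_apply, smul_eq_mul]
      simp only [this]
      apply continuousOn_finset_sum
      intro k _
      exact (hFcont i k).mul ((hΨc k j).add continuousOn_const)
    have hW' : ∀ s : ℝ, t₀ < s → ∀ i j, HasDerivAt (fun u => W u i j) 0 s := by
      intro s hs i j
      have hs0 : 0 < s := ht₀.trans hs
      have hcomm : Commute B (F s) :=
        (((Commute.refl B).neg_right).smul_right (g s)).exp_right
      have hscal : ms / s * c = n * mr / s := by rw [hc]; field_simp
      have hWd : (n * mr / s) • B + (ms / s) • (B * Ψ s) = (ms / s) • (B * V s) := by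
        simp only [hVdef, Matrix.mul_add, mul_smul_comm, Matrix.mul_one, smul_add, smul_smul,
          hscal]
        rw [add_comm]
      have key2 : ((ms / s) • ((-B) * F s)) * V s
          + F s * ((n * mr / s) • B + (ms / s) • (B * Ψ s)) = 0 := by
        rw [hWd]
        have h1 : ((ms / s) • ((-B) * F s)) * V s = -((ms / s) • (B * (F s * V s))) := by
          rw [Matrix.neg_mul, smul_neg, Matrix.neg_mul, Matrix.smul_mul, Matrix.mul_assoc]
        have h2 : F s * ((ms / s) • (B * V s)) = (ms / s) • (B * (F s * V s)) := by
          rw [mul_smul_comm, ← Matrix.mul_assoc, ← hcomm.eq, Matrix.mul_assoc]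
        rw [h1, h2, neg_add_cancel]
      have hterm : ∀ k : Fin H,
          HasDerivAt (fun u => F u i k * (Ψ u k j + c * (1 : Matrix (Fin H) (Fin H) ℝ) k j))
            (((ms / s) • ((-B) * F s)) i k * V s k j
              + F s i k * (((n * mr / s) • B + (ms / s) • (B * Ψ s)) k j)) s := by
        intro k
        have h := (entry i k (hF s hs0)).mul ((hΨ' s hs k j).add_const
          (c * (1 : Matrix (Fin H) (Fin H) ℝ) k j))
        convert h using 2
        · rfl
        · rfl
        · rfl
        · simp [hVdef, Matrix.add_apply, Matrix.smul_apply, smul_eq_mul]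
      have hsum := HasDerivAt.fun_sum (fun k (_ : k ∈ Finset.univ) => hterm k)
      have hzero : (∑ k, (((ms / s) • ((-B) * F s)) i k * V s k j
          + F s i k * (((n * mr / s) • B + (ms / s) • (B * Ψ s)) k j))) = 0 := by
        have h := congrFun (congrFun key2 i) j
        simp only [Matrix.add_apply, Matrix.mul_apply, Matrix.zero_apply] at h
        rw [Finset.sum_add_distrib]
        exact h
      rw [hzero] at hsum
      have hfun : ∀ u : ℝ, W u i j
          = ∑ k, F u i k * (Ψ u k j + c * (1 : Matrix (Fin H) (Fin H) ℝ) k j) := by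
        intro u
        simp [hWdef, hVdef, Matrix.mul_apply, Matrix.add_apply, Matrix.smul_apply, smul_eq_mul]
      simpa only [hfun] using hsum
    have hWconst : ∀ t ∈ Set.Ici t₀, W t = W t₀ := by
      intro t ht
      rcases eq_or_lt_of_le (Set.mem_Ici.mp ht) with h | hlt
      · rw [← h]
      · ext i j
        obtain ⟨x, hx, hx'⟩ := exists_hasDerivAt_eq_slope (fun u => W u i j) (fun _ => 0) hlt
          ((hWcont i j).mono Set.Icc_subset_Ici_self)
          (fun x hx => hW' x hx.1 i j)
        have : W t i j - W t₀ i j = 0 := by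
          have h4 := hx'.symm
          rw [div_eq_iff (sub_ne_zero.mpr hlt.ne')] at h4
          simpa using h4
        linarith [this]
    have hW0 : W t₀ = c • (1 : Matrix (Fin H) (Fin H) ℝ) := by
      rw [hWdef]
      simp only [hVdef, hFdef, hgt₀, hΨ0, zero_smul, NormedSpace.exp_zero, Matrix.one_mul,
        zero_add]
    intro t ht
    have ht0 : (0 : ℝ) < t := lt_of_lt_of_le ht₀ ht
    have hcomm : Commute (g t • B) (g t • (-B)) := by
      have : g t • (-B) = -(g t • B) := by rw [smul_neg]
      rw [this]
      exact (Commute.refl _).neg_right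
    have hEF : E t * F t = 1 := by
      rw [hEdef, hFdef]
      refine (NormedSpace.exp_add_of_commute_of_mem_ball (𝕂 := ℝ) hcomm
        ((NormedSpace.expSeries_radius_eq_top ℝ (Matrix (Fin H) (Fin H) ℝ)).symm ▸ edist_lt_top _ _)
        ((NormedSpace.expSeries_radius_eq_top ℝ (Matrix (Fin H) (Fin H) ℝ)).symm ▸ edist_lt_top _ _)).symm.trans ?_
      have : g t • B + g t • (-B) = 0 := by rw [smul_neg, add_neg_cancel]
      rw [this, NormedSpace.exp_zero]
    have hWt : W t = c • (1 : Matrix (Fin H) (Fin H) ℝ) := (hWconst t ht).trans hW0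
    have h5 : E t * W t = c • E t := by
      rw [hWt, Matrix.mul_smul, Matrix.mul_one]
    rw [hWdef] at h5
    rw [← Matrix.mul_assoc, hEF, Matrix.one_mul] at h5
    have h6 : Ψ t = c • E t - c • (1 : Matrix (Fin H) (Fin H) ℝ) := by
      rw [hVdef] at h5
      exact eq_sub_of_add_eq h5
    rw [hΦdef, smul_sub]
    exact h6
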